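/- Let R be a positive definite Hermitian N×N matrix, h ∈ ℂ^N nonzero, and set w = h†(h h† + R)⁻¹ (a 1×N row vector). Then (w h)·(conj(w h)) / (w R w†) = h† R⁻¹ h, where w† is the conjugate transpose of w. -/

import Mathlib

open Matrix ComplexOrder

theorem stmt_12 (N : ℕ) (R : Matrix (Fin N) (Fin N) ℂ) (hR : R.PosDef)
    (h : Fin N → ℂ) (hh : h ≠ 0) :
    letI w : Fin N → ℂ := Matrix.vecMul (star h) (Matrix.vecMulVec h (star h) + R)⁻¹
    (w ⬝ᵥ h) * (starRingEnd ℂ) (w ⬝ᵥ h) / (w ⬝ᵥ R.mulVec (star w)) =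
      star h ⬝ᵥ R⁻¹.mulVec h := by
  classical
  set w : Fin N → ℂ := Matrix.vecMul (star h) (Matrix.vecMulVec h (star h) + R)⁻¹ with hwdef
  set A : Matrix (Fin N) (Fin N) ℂ := Matrix.vecMulVec h (star h) + R with hAdef
  set v : Fin N → ℂ := R⁻¹ *ᵥ h with hvdef
  set s : ℂ := star h ⬝ᵥ R⁻¹.mulVec h with hsdef
  have hspos : 0 < s := hR.inv.dotProduct_mulVec_pos hh
  have hsim : s.im = 0 := ((Complex.lt_def.mp hspos).2).symm
  have hsre : 0 < s.re := by simpa using (Complex.lt_def.mp hspos).1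
  have hsne : s ≠ 0 := hspos.ne'
  have hconj : (starRingEnd ℂ) s = s := Complex.conj_eq_iff_im.mpr hsim
  have h1s : (1 : ℂ) + s ≠ 0 := by
    intro e
    have := congrArg Complex.re e
    simp [Complex.add_re] at this
    linarith
  have hconj1 : (starRingEnd ℂ) ((1 + s)⁻¹) = (1 + s)⁻¹ := by
    rw [map_inv₀, map_add, _root_.map_one, hconj]
  -- A is positive definite
  have hvv : (Matrix.vecMulVec h (star h)).PosSemidef := by
    rw [Matrix.vecMulVec_eq (Fin 1), ← Matrix.conjTranspose_replicateCol]
    exact Matrix.posSemidef_self_mul_conjTranspose _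
  have hApd : A.PosDef := Matrix.PosDef.posSemidef_add hvv hR
  have hAdet : IsUnit A.det := hApd.det_pos.ne'.isUnit
  have hRdet : IsUnit R.det := hR.det_pos.ne'.isUnit
  -- R *ᵥ v = h
  have hRv : R *ᵥ v = h := by
    rw [hvdef, Matrix.mulVec_mulVec, Matrix.mul_nonsing_inv R hRdet, Matrix.one_mulVec]
  -- rank-one action
  have hsv : star h ⬝ᵥ v = s := rfl
  have key1 : Matrix.vecMulVec h (star h) *ᵥ v = s • h := by
    rw [← hsv]
    ext i
    simp only [Matrix.mulVec, Matrix.vecMulVec_apply, dotProduct, Pi.smul_apply, smul_eq_mul,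
      Finset.sum_mul, Finset.mul_sum]
    exact Finset.sum_congr rfl fun j _ => by ring
  have hAv : A *ᵥ v = (1 + s) • h := by
    rw [hAdef, Matrix.add_mulVec, key1, hRv, add_smul, one_smul, add_comm]
  -- Sherman–Morrison
  have key2 : A⁻¹ *ᵥ h = (1 + s)⁻¹ • v := by
    have e1 : A⁻¹ *ᵥ (A *ᵥ v) = v := by
      rw [Matrix.mulVec_mulVec, Matrix.nonsing_inv_mul A hAdet, Matrix.one_mulVec]
    rw [hAv, Matrix.mulVec_smul] at e1
    rw [← e1, smul_smul, inv_mul_cancel₀ h1s, one_smul]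
  -- w ⬝ᵥ h
  have hwh : w ⬝ᵥ h = (1 + s)⁻¹ * s := by
    show (star h ᵥ* A⁻¹) ⬝ᵥ h = _
    rw [← Matrix.dotProduct_mulVec, key2, dotProduct_smul]
    simp [hsdef, hvdef, smul_eq_mul]
  -- star w
  have hsw : star w = (1 + s)⁻¹ • v := by
    show star (star h ᵥ* A⁻¹) = _
    rw [Matrix.star_vecMul, star_star, hApd.inv.1.eq, key2]
  -- denominator
  have hden : w ⬝ᵥ R.mulVec (star w) = (1 + s)⁻¹ * ((1 + s)⁻¹ * s) := by
    rw [hsw, Matrix.mulVec_smul, hRv, dotProduct_smul, smul_eq_mul, hwh]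
  rw [hwh, hden, _root_.map_mul, hconj1, hconj]
  field_simp
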